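/- Let m = 2k+1 be an odd positive integer, u > 0, h = u² + u^{2m}, and let L⁺ be the arc of the circle x² + y² = h lying in y ≥ x^m from (-u,(-u)^m) to (u,u^m). Then J_{1,1} := ∫_{L⁺} x y dx = -(2/3) u^{3m}. -/

import Mathlib

/-- The angle of the right intersection point `(u, u^m)` of the circle
`x^2 + y^2 = u^2 + u^(2m)` with the switching curve `y = x^m`. -/
noncomputable def thetaB (m : ℕ) (u : ℝ) : ℝ :=
  Real.arcsin (u ^ m / Real.sqrt (u ^ 2 + u ^ (2 * m)))

/-- `J_{i,j} = ∫_{L⁺} x^i y^j dx` along the arc of the circle `x^2 + y^2 = u^2 + u^(2m)`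
lying in `y ≥ x^m` (for odd `m`), oriented from `(-u, -u^m)` (angle `π + θ_B`)
to `(u, u^m)` (angle `θ_B`), i.e. clockwise through the top.  With
`x = √h cos θ`, `y = √h sin θ`, `dx = -√h sin θ dθ`, traversal from `π + θ_B`
down to `θ_B` gives the integral below. -/
noncomputable def Jodd (m : ℕ) (u : ℝ) (i j : ℕ) : ℝ :=
  ∫ t in thetaB m u..(Real.pi + thetaB m u),
    Real.sqrt (u ^ 2 + u ^ (2 * m)) ^ (i + j + 1) * Real.cos t ^ i * Real.sin t ^ (j + 1)

/-- `I_{i,j} = ∫_{L⁻} x^i y^j dx` along the complementary lower arc, oriented from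
`(u, u^m)` (angle `θ_B`) down through the bottom to `(-u, -u^m)` (angle `θ_B - π`). -/
noncomputable def Iodd (m : ℕ) (u : ℝ) (i j : ℕ) : ℝ :=
  ∫ t in (thetaB m u - Real.pi)..thetaB m u,
    Real.sqrt (u ^ 2 + u ^ (2 * m)) ^ (i + j + 1) * Real.cos t ^ i * Real.sin t ^ (j + 1)

lemma int_cos_sin_sq (a b : ℝ) :
    ∫ t in a..b, Real.cos t * Real.sin t ^ 2 = (Real.sin b ^ 3 - Real.sin a ^ 3) / 3 := by
  have h : ∀ x ∈ Set.uIcc a b,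
      HasDerivAt (fun t => Real.sin t ^ 3 / 3) (Real.cos x * Real.sin x ^ 2) x := by
    intro x _
    have h : HasDerivAt (fun t => Real.sin t ^ 3 / 3) ((3:ℕ) * Real.sin x ^ (3 - 1) * Real.cos x / 3) x := ((Real.hasDerivAt_sin x).pow 3).div_const 3
    convert h using 1
    ring
  rw [intervalIntegral.integral_eq_sub_of_hasDerivAt h
    (((Real.continuous_cos.mul (Real.continuous_sin.pow 2))).intervalIntegrable a b)]
  ring

/-- for `m = 2k+1` and `u > 0`, `J_{1,1} = ∫_{L⁺} x y dx = -(2/3) u^(3m)`. -/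
theorem J11_eq (k : ℕ) (m : ℕ) (hm : m = 2 * k + 1) (u : ℝ) (hu : 0 < u) :
    Jodd m u 1 1 = -(2 / 3) * u ^ (3 * m) := by
  set h := u ^ 2 + u ^ (2 * m) with hh
  have hpos : 0 < h := by positivity
  have hs : 0 < Real.sqrt h := Real.sqrt_pos.mpr hpos
  have hsin : Real.sin (thetaB m u) = u ^ m / Real.sqrt h := by
    apply Real.sin_arcsin
    · have : (0:ℝ) ≤ u ^ m / Real.sqrt h := by positivity
      linarith
    · rw [div_le_one hs]
      calc u ^ m = Real.sqrt ((u ^ m) ^ 2) := (Real.sqrt_sq (by positivity)).symm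
        _ ≤ Real.sqrt h := by
            apply Real.sqrt_le_sqrt
            rw [← pow_mul, mul_comm]
            simp [hh]
            positivity
  have key : Jodd m u 1 1 =
      Real.sqrt h ^ 3 * ∫ t in thetaB m u..(Real.pi + thetaB m u),
        Real.cos t * Real.sin t ^ 2 := by
    rw [Jodd, ← intervalIntegral.integral_const_mul]
    congr 1; ext t; ring
  rw [key, int_cos_sin_sq]
  simp only [Real.sin_add, Real.sin_pi, Real.cos_pi, hsin]
  have hsm : (Real.sqrt h) ≠ 0 := by positivity
  have hpm : u ^ (3 * m) = (u ^ m) ^ 3 := by rw [← pow_mul, mul_comm]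
  rw [hpm]
  field_simp
  ring
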